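/- Suppose a group H acts on a set Y and there are points x, y ∈ Y such that for every ψ ∈ H the set {ψ·x, ψ·y} ∩ {x, y} is nonempty. Then either the stabilizer of x or the stabilizer of y has finite index in H. -/

import Mathlib

open scoped Pointwise

/-- Lemma 7.0.4: if a group `H` acts on a set `Y` and there are points `x, y` such that
for every `ψ ∈ H` the set `{ψ·x, ψ·y} ∩ {x, y}` is nonempty, then the stabilizer of `x`
or the stabilizer of `y` has finite index in `H`. -/
theorem stmt2 {H Y : Type*} [Group H] [MulAction H Y] (x y : Y)
    (h : ∀ ψ : H, (({ψ • x, ψ • y} : Set Y) ∩ {x, y}).Nonempty) :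
    (MulAction.stabilizer H x).FiniteIndex ∨ (MulAction.stabilizer H y).FiniteIndex := by
  classical
  set Sx := MulAction.stabilizer H x with hSx
  set Sy := MulAction.stabilizer H y with hSy
  set a : H := if ha : ∃ a : H, a • x = y then ha.choose else 1 with ha_def
  set b : H := if hb : ∃ b : H, b • y = x then hb.choose else 1 with hb_def
  let K : Fin 4 → Subgroup H := ![Sx, Sx, Sy, Sy]
  let g : Fin 4 → H := ![1, a, b, 1]
  have hcovers : (⋃ i ∈ (Finset.univ : Finset (Fin 4)),
      (g i) • ((K i : Subgroup H) : Set H)) = Set.univ := by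
    rw [Set.eq_univ_iff_forall]
    intro ψ
    obtain ⟨z, hz1, hz2⟩ := h ψ
    simp only [Set.mem_insert_iff, Set.mem_singleton_iff] at hz1 hz2
    have hcase : (ψ • x = x) ∨ (ψ • x = y) ∨ (ψ • y = x) ∨ (ψ • y = y) := by
      rcases hz1 with rfl | rfl <;> rcases hz2 with h' | h' <;> tauto
    simp only [Set.mem_iUnion]
    rcases hcase with h' | h' | h' | h'
    · exact ⟨0, Finset.mem_univ _, by
        simpa [g, K, mem_leftCoset_iff, Sx, MulAction.mem_stabilizer_iff] using h'⟩
    · refine ⟨1, Finset.mem_univ _, ?_⟩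
      have hex : ∃ a : H, a • x = y := ⟨ψ, h'⟩
      have ha' : a • x = y := by rw [ha_def, dif_pos hex]; exact hex.choose_spec
      simp only [g, K, mem_leftCoset_iff, Matrix.cons_val_one, Matrix.head_cons,
        SetLike.mem_coe, Sx, MulAction.mem_stabilizer_iff, Matrix.cons_val_zero]
      rw [mul_smul, h', ← ha', inv_smul_smul]
    · refine ⟨2, Finset.mem_univ _, ?_⟩
      have hex : ∃ b : H, b • y = x := ⟨ψ, h'⟩
      have hb' : b • y = x := by rw [hb_def, dif_pos hex]; exact hex.choose_spec
      simp only [g, K, mem_leftCoset_iff, SetLike.mem_coe, Sy,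
        MulAction.mem_stabilizer_iff, Matrix.cons_val_two, Matrix.tail_cons, Matrix.head_cons]
      rw [mul_smul, h', ← hb', inv_smul_smul]
    · exact ⟨3, Finset.mem_univ _, by
        simpa [g, K, mem_leftCoset_iff, Sy, MulAction.mem_stabilizer_iff] using h'⟩
  obtain ⟨k, -, hk⟩ := Subgroup.exists_finiteIndex_of_leftCoset_cover hcovers
  fin_cases k <;>
    simp only [K, Matrix.cons_val_zero, Matrix.cons_val_one, Matrix.head_cons,
      Matrix.cons_val_two, Matrix.tail_cons, Matrix.cons_val_three, Matrix.cons_val_fin_one,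
      Fin.isValue] at hk <;> tauto
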